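/- Let J : {(z,w) ∈ ℂ² : z ≠ 0} → ℂ² be the map J(z,w) = (z, w/z). Let X ⊆ ℂ² be a compact set such that z ≠ 0 for every (z,w) ∈ X. Then every point of the rational hull h_R(X) has nonzero first coordinate, J(X) is compact, and h_R(J(X)) = J(h_R(X)). -/

import Mathlib

open Complex Set

/-- Evaluation of a polynomial in two variables at a point of `ℂ × ℂ`. -/
noncomputable def evalP (P : MvPolynomial (Fin 2) ℂ) (x : ℂ × ℂ) : ℂ :=
  MvPolynomial.eval ![x.1, x.2] P
/-- The rational hull of a compact set `X ⊆ ℂ²`. -/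
def rationalHull (X : Set (ℂ × ℂ)) : Set (ℂ × ℂ) :=
  {x | ∀ P : MvPolynomial (Fin 2) ℂ, evalP P x ∈ evalP P '' X}

open MvPolynomial in
lemma evalP_clear (P : MvPolynomial (Fin 2) ℂ) :
    ∃ Q : MvPolynomial (Fin 2) ℂ, ∀ x : ℂ × ℂ, x.1 ≠ 0 →
      evalP Q x = x.1 ^ P.totalDegree * evalP P (x.1, x.2 / x.1) := by
  set N := P.totalDegree with hN
  refine ⟨∑ d ∈ P.support, C (P.coeff d) * X 0 ^ (d 0 + (N - d 1)) * X 1 ^ (d 1), ?_⟩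
  intro x hx
  have hev : ∀ p : MvPolynomial (Fin 2) ℂ, ∀ a b : ℂ, evalP p (a, b) = eval ![a, b] p := by
    intro p a b; rfl
  rw [hev, hev, map_sum, eval_eq', Finset.mul_sum]
  refine Finset.sum_congr rfl fun d hd => ?_
  have hd1 : d 1 ≤ N := by
    refine le_trans ?_ (MvPolynomial.le_totalDegree hd)
    by_cases h : d 1 = 0
    · simp [h]
    · exact Finset.single_le_sum (f := fun i => d i) (fun i _ => Nat.zero_le _)
        (Finsupp.mem_support_iff.2 h)
  have hpow : x.1 ^ (N - d 1) * x.1 ^ (d 1) = x.1 ^ N := pow_sub_mul_pow x.1 hd1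
  simp only [map_mul, map_pow, eval_C, eval_X, Fin.prod_univ_two,
    Matrix.cons_val_zero, Matrix.cons_val_one, Matrix.head_cons, div_pow, pow_add]
  field_simp
  rw [← hpow]
  ring

open MvPolynomial in
lemma evalP_bind (P : MvPolynomial (Fin 2) ℂ) (x : ℂ × ℂ) :
    evalP (bind₁ ![X 0, X 0 * X 1] P) x = evalP P (x.1, x.1 * x.2) := by
  show eval ![x.1, x.2] _ = eval ![x.1, x.1 * x.2] P
  rw [show (eval ![x.1, x.2] : MvPolynomial (Fin 2) ℂ →+* ℂ) =
    eval₂Hom (RingHom.id ℂ) ![x.1, x.2] from rfl, eval₂Hom_bind₁]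
  have h : (fun i => (eval₂Hom (RingHom.id ℂ) ![x.1, x.2]) (![X 0, X 0 * X 1] i)) =
      ![x.1, x.1 * x.2] := by
    funext i; fin_cases i <;> simp
  rw [h]
  rfl

lemma hull_fst_ne (X : Set (ℂ × ℂ)) (hz : ∀ x ∈ X, x.1 ≠ 0) :
    ∀ y ∈ rationalHull X, y.1 ≠ 0 := by
  intro y hy
  obtain ⟨x, hx, hxy⟩ := hy (MvPolynomial.X 0)
  have : x.1 = y.1 := by simpa [evalP] using hxy
  rw [← this]; exact hz x hx

/-- For the rational automorphism `J(z,w) = (z, w/z)` of `{z ≠ 0}` and a compact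
`X ⊆ {z ≠ 0}`: every point of the rational hull of `X` has nonzero first coordinate,
`J(X)` is compact, and `h_R(J(X)) = J(h_R(X))`. -/
theorem rationalHull_image_J (X : Set (ℂ × ℂ)) (hX : IsCompact X)
    (hz : ∀ x ∈ X, x.1 ≠ 0) :
    (∀ y ∈ rationalHull X, y.1 ≠ 0) ∧
    IsCompact ((fun x : ℂ × ℂ => (x.1, x.2 / x.1)) '' X) ∧
    rationalHull ((fun x : ℂ × ℂ => (x.1, x.2 / x.1)) '' X) =
      (fun x : ℂ × ℂ => (x.1, x.2 / x.1)) '' rationalHull X := by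
  set J : ℂ × ℂ → ℂ × ℂ := fun x => (x.1, x.2 / x.1) with hJ
  have hzJ : ∀ p ∈ J '' X, p.1 ≠ 0 := by
    rintro p ⟨x, hx, rfl⟩; exact hz x hx
  refine ⟨hull_fst_ne X hz, ?_, ?_⟩
  · exact hX.image_of_continuousOn
      (continuous_fst.continuousOn.prodMk
        (continuous_snd.continuousOn.div continuous_fst.continuousOn hz))
  · apply Subset.antisymm
    · -- h_R(J X) ⊆ J (h_R X)
      intro u hu
      have hu1 : u.1 ≠ 0 := hull_fst_ne _ hzJ u hu
      refine ⟨(u.1, u.1 * u.2), ?_, ?_⟩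
      · intro P
        obtain ⟨p, hp, hpu⟩ := hu (MvPolynomial.bind₁ ![MvPolynomial.X 0,
          MvPolynomial.X 0 * MvPolynomial.X 1] P)
        obtain ⟨x, hx, rfl⟩ := hp
        rw [evalP_bind, evalP_bind] at hpu
        refine ⟨x, hx, ?_⟩
        have hx1 := hz x hx
        have h1 : x.1 * (x.2 / x.1) = x.2 := by field_simp
        simpa [hJ, h1] using hpu
      · have : u.1 * u.2 / u.1 = u.2 := by field_simp
        simp [hJ, this]
    · -- J (h_R X) ⊆ h_R(J X)
      rintro _ ⟨y, hy, rfl⟩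
      have hy1 : y.1 ≠ 0 := hull_fst_ne X hz y hy
      intro P
      obtain ⟨Q, hQ⟩ := evalP_clear P
      set c := evalP P (y.1, y.2 / y.1) with hc
      set N := P.totalDegree with hN
      obtain ⟨x, hx, hxy⟩ := hy (Q - MvPolynomial.C c * MvPolynomial.X 0 ^ N)
      have hx1 := hz x hx
      have e : ∀ v : ℂ × ℂ, evalP (Q - MvPolynomial.C c * MvPolynomial.X 0 ^ N) v =
          evalP Q v - c * v.1 ^ N := by
        intro v; simp [evalP]
      have hevx : evalP (Q - MvPolynomial.C c * MvPolynomial.X 0 ^ N) x =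
          x.1 ^ N * evalP P (x.1, x.2 / x.1) - c * x.1 ^ N := by
        rw [e, hQ x hx1]
      have hevy : evalP (Q - MvPolynomial.C c * MvPolynomial.X 0 ^ N) y = 0 := by
        rw [e, hQ y hy1, ← hc]; ring
      rw [hevy, hevx] at hxy
      have : evalP P (x.1, x.2 / x.1) = c := by
        rw [sub_eq_zero] at hxy
        exact mul_left_cancel₀ (pow_ne_zero N hx1) (hxy.trans (mul_comm c _))
      exact ⟨J x, ⟨x, hx, rfl⟩, by simpa [hJ] using this⟩
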